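/- Under the Vanilla Preconditioned Discrete-HAMS scheme, if a proposal (s*, v*) with v* = v_{t+1/2} + s_t − s* is accepted or rejected (with rejection keeping (s_t, v_{t+1/2})), then s_{t+1} + v_{t+1} = s_t + v_{t+1/2} always holds; consequently, without the auto-regression step, the quantity s_t + v_t is conserved along the chain and v_t is confined to the finite set {c₀ − s : s ∈ S} where c₀ = s₀ + v₀, so the v-chain cannot be ergodic for a Gaussian distribution. -/
import Mathlib


/-- Degeneracy of the auxiliary scheme without auto-regression: since every accepted
proposal satisfies s* + v* = s_t + v_t and rejection keeps (s_t, v_t), the quantity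
s_t + v_t is conserved, v_t is confined to {c₀ − s : s ∈ S} with c₀ = s₀ + v₀, and the
range of the momentum chain is finite (hence not ergodic for a Gaussian distribution). -/
theorem stmt16 {d : ℕ} (S : Finset (Fin d → ℝ))
    (sseq vseq : ℕ → Fin d → ℝ)
    (hmem : ∀ t, sseq t ∈ S)
    (hstep : ∀ t,
      (∃ sstar ∈ S, sseq (t + 1) = sstar ∧ vseq (t + 1) = vseq t + sseq t - sstar) ∨
      (sseq (t + 1) = sseq t ∧ vseq (t + 1) = vseq t)) :
    (∀ t, sseq t + vseq t = sseq 0 + vseq 0) ∧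
    (∀ t, ∃ s ∈ S, vseq t = (sseq 0 + vseq 0) - s) ∧
    (Set.range vseq).Finite := by
  have hcons : ∀ t, sseq t + vseq t = sseq 0 + vseq 0 := by
    intro t
    induction t with
    | zero => rfl
    | succ t ih =>
      rcases hstep t with ⟨sstar, _, hs, hv⟩ | ⟨hs, hv⟩
      · rw [hs, hv, ← ih]; ring
      · rw [hs, hv, ih]
  refine ⟨hcons, ?_, ?_⟩
  · intro t
    exact ⟨sseq t, hmem t, by rw [← hcons t]; ring⟩
  · have hsub : Set.range vseq ⊆ (S.image fun s => (sseq 0 + vseq 0) - s : Finset _) := by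
      rintro _ ⟨t, rfl⟩
      simp only [Finset.coe_image, Set.mem_image, Finset.mem_coe]
      exact ⟨sseq t, hmem t, by rw [← hcons t]; ring⟩
    exact Set.Finite.subset (Finset.finite_toSet _) hsub
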